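/- Let B ∈ ℝ^{n×m} have full column rank and let Δ be a symmetric n×n matrix such that Δ = BH + H'B' for some H ∈ ℝ^{m×n}. Among all H satisfying this equation, the minimizer of the Frobenius norm ‖H‖_F is unique and has the form H = B'Λ for some symmetric n×n matrix Λ. -/

import Mathlib

open Matrix

noncomputable def frobNorm {n m : ℕ} (H : Matrix (Fin m) (Fin n) ℝ) : ℝ :=
  Real.sqrt ((H * Hᵀ).trace)


namespace FrobAux

variable {m n : ℕ}

lemma trace_sq_nonneg (X : Matrix (Fin m) (Fin n) ℝ) : 0 ≤ (X * Xᵀ).trace := by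
  rw [Matrix.trace]
  refine Finset.sum_nonneg fun i _ => ?_
  simp only [Matrix.diag_apply, Matrix.mul_apply, Matrix.transpose_apply]
  exact Finset.sum_nonneg fun j _ => mul_self_nonneg _

lemma trace_sq_eq_zero {X : Matrix (Fin m) (Fin n) ℝ} (h : (X * Xᵀ).trace = 0) : X = 0 := by
  ext i j
  have h1 : ∀ i ∈ Finset.univ, (0:ℝ) ≤ (X * Xᵀ).diag i := fun i _ => by
    simp only [Matrix.diag_apply, Matrix.mul_apply, Matrix.transpose_apply]
    exact Finset.sum_nonneg fun j _ => mul_self_nonneg _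
  have h2 := (Finset.sum_eq_zero_iff_of_nonneg h1).mp h i (Finset.mem_univ i)
  simp only [Matrix.diag_apply, Matrix.mul_apply, Matrix.transpose_apply] at h2
  have h3 := (Finset.sum_eq_zero_iff_of_nonneg (fun j _ => mul_self_nonneg (X i j))).mp h2 j
    (Finset.mem_univ j)
  simpa [mul_self_eq_zero] using h3

noncomputable instance core (m n : ℕ) : InnerProductSpace.Core ℝ (Matrix (Fin m) (Fin n) ℝ) where
  inner X Y := (X * Yᵀ).trace
  conj_inner_symm X Y := by
    simp only [starRingEnd_apply, star_trivial]
    rw [← Matrix.trace_transpose, Matrix.transpose_mul, Matrix.transpose_transpose]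
  re_inner_nonneg X := trace_sq_nonneg X
  definite X := trace_sq_eq_zero
  add_left X Y Z := by
    show ((X + Y) * Zᵀ).trace = (X * Zᵀ).trace + (Y * Zᵀ).trace
    rw [Matrix.add_mul, Matrix.trace_add]
  smul_left X Y r := by
    show ((r • X) * Yᵀ).trace = _
    simp [Matrix.smul_mul]

noncomputable instance : NormedAddCommGroup (Matrix (Fin m) (Fin n) ℝ) :=
  (core m n).toNormedAddCommGroup

noncomputable instance : InnerProductSpace ℝ (Matrix (Fin m) (Fin n) ℝ) :=
  InnerProductSpace.ofCore (core m n).toCore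

lemma inner_def (X Y : Matrix (Fin m) (Fin n) ℝ) :
    (inner ℝ X Y : ℝ) = (X * Yᵀ).trace := rfl

end FrobAux

namespace FrobAux

variable {m n : ℕ}

/-- The constraint map. -/
noncomputable def L (B : Matrix (Fin n) (Fin m) ℝ) :
    Matrix (Fin m) (Fin n) ℝ →ₗ[ℝ] Matrix (Fin n) (Fin n) ℝ where
  toFun H := B * H + Hᵀ * Bᵀ
  map_add' X Y := by
    simp only [Matrix.mul_add, Matrix.transpose_add, Matrix.add_mul]
    abel
  map_smul' c X := by
    simp [Matrix.mul_smul, Matrix.transpose_smul, Matrix.smul_mul, smul_add]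

/-- The candidate subspace: matrices of the form Bᵀ Λ with Λ symmetric. -/
noncomputable def W (B : Matrix (Fin n) (Fin m) ℝ) :
    Submodule ℝ (Matrix (Fin m) (Fin n) ℝ) where
  carrier := {X | ∃ Λ : Matrix (Fin n) (Fin n) ℝ, Λ.IsSymm ∧ X = Bᵀ * Λ}
  add_mem' := by
    rintro x y ⟨Λ₁, h₁, rfl⟩ ⟨Λ₂, h₂, rfl⟩
    exact ⟨Λ₁ + Λ₂, h₁.add h₂, (Matrix.mul_add _ _ _).symm⟩
  zero_mem' := ⟨0, Matrix.isSymm_zero, by simp⟩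
  smul_mem' := by
    rintro c x ⟨Λ, h, rfl⟩
    exact ⟨c • Λ, h.smul c, (Matrix.mul_smul _ _ _).symm⟩

lemma inner_W (B : Matrix (Fin n) (Fin m) ℝ) (Λ : Matrix (Fin n) (Fin n) ℝ)
    (X : Matrix (Fin m) (Fin n) ℝ) :
    (inner ℝ (Bᵀ * Λ) X : ℝ) = (Λ * (B * X)ᵀ).trace := by
  rw [inner_def]
  rw [Matrix.transpose_mul, Matrix.mul_assoc, ← Matrix.mul_assoc Λ, Matrix.trace_mul_comm]

lemma orthogonal_W (B : Matrix (Fin n) (Fin m) ℝ) :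
    (W B)ᗮ = LinearMap.ker (L B) := by
  ext X
  rw [Submodule.mem_orthogonal, LinearMap.mem_ker]
  constructor
  · intro h
    have h0 := h (Bᵀ * (B * X + Xᵀ * Bᵀ)) ⟨_, by
      constructor
      · show (B * X + Xᵀ * Bᵀ)ᵀ = _
        rw [Matrix.transpose_add, Matrix.transpose_mul, Matrix.transpose_mul,
          Matrix.transpose_transpose, Matrix.transpose_transpose]
        abel
      · rfl⟩
    rw [inner_W] at h0
    set S := B * X + Xᵀ * Bᵀ with hS
    have hSsymm : Sᵀ = S := by
      rw [hS, Matrix.transpose_add, Matrix.transpose_mul, Matrix.transpose_mul,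
        Matrix.transpose_transpose, Matrix.transpose_transpose]
      abel
    have key : (S * Sᵀ).trace = 0 := by
      have e1 : (S * (B * X)ᵀ).trace = (S * (Xᵀ * Bᵀ)).trace := by
        rw [Matrix.transpose_mul]
      have e2 : (S * (B * X)).trace = (S * (Xᵀ * Bᵀ)).trace := by
        rw [← Matrix.trace_transpose (S * (B * X)), Matrix.transpose_mul,
          Matrix.transpose_mul, hSsymm, Matrix.trace_mul_comm]
      have : (S * Sᵀ).trace = (S * (B * X)).trace + (S * (Xᵀ * Bᵀ)).trace := by
        rw [hSsymm]
        rw [show S * S = S * (B * X) + S * (Xᵀ * Bᵀ) by rw [← Matrix.mul_add, ← hS],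
          Matrix.trace_add]
      rw [this, e2, ← e1, ← two_mul]
      have : (S * (B * X)ᵀ).trace = 0 := h0
      rw [this, mul_zero]
    have := trace_sq_eq_zero key
    rwa [hS] at this
  · intro h u hu
    obtain ⟨Λ, hΛ, rfl⟩ := hu
    rw [inner_W]
    have hBX : (B * X)ᵀ = -(B * X) := by
      have : B * X + Xᵀ * Bᵀ = 0 := h
      have h2 : Xᵀ * Bᵀ = -(B * X) := by rw [eq_neg_iff_add_eq_zero, add_comm]; exact this
      rw [Matrix.transpose_mul, h2]
    rw [hBX]
    have e3 : (Λ * (B * X)).trace = -(Λ * (B * X)).trace := by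
      conv_lhs => rw [← Matrix.trace_transpose (Λ * (B * X)), Matrix.transpose_mul, hΛ.eq,
        Matrix.trace_mul_comm, hBX]
      rw [mul_neg, Matrix.trace_neg]
    have : (Λ * (B * X)).trace = 0 := by linarith
    rw [mul_neg, Matrix.trace_neg, this, neg_zero]

end FrobAux

namespace FrobAux

variable {m n : ℕ}

lemma frob_eq_norm (X : Matrix (Fin m) (Fin n) ℝ) : frobNorm X = ‖X‖ := by
  rw [frobNorm, norm_eq_sqrt_real_inner, inner_def]

end FrobAux

theorem min_frobenius_solution_unique_and_in_range (n m : ℕ)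
    (B : Matrix (Fin n) (Fin m) ℝ) (hB : B.rank = m)
    (Δ : Matrix (Fin n) (Fin n) ℝ) (hΔ : Δ.IsSymm)
    (hsolv : ∃ H : Matrix (Fin m) (Fin n) ℝ, B * H + Hᵀ * Bᵀ = Δ) :
    ∃! H : Matrix (Fin m) (Fin n) ℝ,
      (B * H + Hᵀ * Bᵀ = Δ ∧
        (∀ H' : Matrix (Fin m) (Fin n) ℝ, B * H' + H'ᵀ * Bᵀ = Δ →
          frobNorm H ≤ frobNorm H')) ∧
      ∃ Λ : Matrix (Fin n) (Fin n) ℝ, Λ.IsSymm ∧ H = Bᵀ * Λ := by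
  classical
  obtain ⟨H1, hH1⟩ := hsolv
  set V : Submodule ℝ (Matrix (Fin m) (Fin n) ℝ) := LinearMap.ker (FrobAux.L B) with hVdef
  haveI : FiniteDimensional ℝ (Matrix (Fin m) (Fin n) ℝ) := by infer_instance
  obtain ⟨K, hK, H0, hH0, hdecomp⟩ := V.exists_add_mem_mem_orthogonal H1
  have hVW : Vᗮ = FrobAux.W B := by
    rw [hVdef, ← FrobAux.orthogonal_W B, Submodule.orthogonal_orthogonal]
  have hH0W : H0 ∈ FrobAux.W B := hVW ▸ hH0
  have hL1 : FrobAux.L B H1 = Δ := hH1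
  have hsol0 : B * H0 + H0ᵀ * Bᵀ = Δ := by
    have h2 : FrobAux.L B H1 = FrobAux.L B K + FrobAux.L B H0 := by
      rw [← map_add, ← hdecomp]
    have h3 : FrobAux.L B K = 0 := hK
    have : FrobAux.L B H0 = Δ := by rw [← hL1, h2, h3, zero_add]
    exact this
  -- key Pythagorean fact
  have pyth : ∀ H' : Matrix (Fin m) (Fin n) ℝ, B * H' + H'ᵀ * Bᵀ = Δ →
      ‖H'‖ ^ 2 = ‖H0‖ ^ 2 + ‖H' - H0‖ ^ 2 := by
    intro H' hH'
    have hmem : H' - H0 ∈ V := by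
      have : FrobAux.L B (H' - H0) = 0 := by
        rw [map_sub]
        have e1 : FrobAux.L B H' = Δ := hH'
        have e2 : FrobAux.L B H0 = Δ := hsol0
        rw [e1, e2, sub_self]
      exact this
    have hinner : (inner ℝ H0 (H' - H0) : ℝ) = 0 := by
      have := (Submodule.mem_orthogonal V H0).mp hH0 _ hmem
      rwa [real_inner_comm] at this
    have := norm_add_sq_real H0 (H' - H0)
    rw [hinner] at this
    have e : H0 + (H' - H0) = H' := by abel
    rw [e] at this
    linarith
  have hmin : ∀ H' : Matrix (Fin m) (Fin n) ℝ, B * H' + H'ᵀ * Bᵀ = Δ →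
      frobNorm H0 ≤ frobNorm H' := by
    intro H' hH'
    rw [FrobAux.frob_eq_norm, FrobAux.frob_eq_norm]
    have := pyth H' hH'
    nlinarith [norm_nonneg H', norm_nonneg H0, sq_nonneg ‖H' - H0‖]
  refine ⟨H0, ⟨⟨hsol0, hmin⟩, ?_⟩, ?_⟩
  · obtain ⟨Λ, hΛ, hrep⟩ := hH0W
    exact ⟨Λ, hΛ, hrep⟩
  · rintro y ⟨⟨hysol, hymin⟩, -⟩
    have h1 := pyth y hysol
    have h2 : frobNorm y ≤ frobNorm H0 := hymin H0 hsol0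
    rw [FrobAux.frob_eq_norm, FrobAux.frob_eq_norm] at h2
    have h3 : ‖y - H0‖ ^ 2 ≤ 0 := by nlinarith [norm_nonneg y, norm_nonneg H0]
    have h4 : ‖y - H0‖ = 0 := by nlinarith [norm_nonneg (y - H0)]
    have := norm_eq_zero.mp h4
    exact sub_eq_zero.mp this
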